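/- Let θ > 0 and c ≥ 0. There exist constants C > 0 and h₀ ∈ (0,1], depending only on θ and c, such that for every h ∈ (0, h₀] the following holds: let p₀, p₁, p₂ ∈ ℝ³ be the vertices of a triangle τ₁ all of whose side lengths ‖p₁ − p₀‖, ‖p₂ − p₀‖, ‖p₂ − p₁‖ lie in [θh, h] and whose area satisfies A(τ₁) ≥ θh², and let q₀, q₁, q₂ ∈ ℝ³ be the vertices of a triangle τ₂ such that | ‖q_i − q_j‖ − ‖p_i − p_j‖ | ≤ c h³ for every pair i ≠ j. Then | A(τ₂)/A(τ₁) − 1 | ≤ C h². -/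

import Mathlib

/-- The cross product on `ℝ³` with the Euclidean norm. -/
noncomputable def cross3 (u v : EuclideanSpace ℝ (Fin 3)) : EuclideanSpace ℝ (Fin 3) :=
  (WithLp.equiv 2 (Fin 3 → ℝ)).symm
    ![u 1 * v 2 - u 2 * v 1, u 2 * v 0 - u 0 * v 2, u 0 * v 1 - u 1 * v 0]

/-- Area of the triangle with vertices `p₀ p₁ p₂ ∈ ℝ³`. -/
noncomputable def triArea (p₀ p₁ p₂ : EuclideanSpace ℝ (Fin 3)) : ℝ :=
  ‖cross3 (p₁ - p₀) (p₂ - p₀)‖ / 2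

lemma normsq3 (x : EuclideanSpace ℝ (Fin 3)) : ‖x‖ ^ 2 = x 0 ^ 2 + x 1 ^ 2 + x 2 ^ 2 := by
  rw [EuclideanSpace.norm_eq, Real.sq_sqrt (by positivity)]
  simp [Fin.sum_univ_three, sq_abs]

lemma heron (p₀ p₁ p₂ : EuclideanSpace ℝ (Fin 3)) :
    16 * triArea p₀ p₁ p₂ ^ 2 =
      4 * ‖p₁ - p₀‖ ^ 2 * ‖p₂ - p₀‖ ^ 2 -
        (‖p₁ - p₀‖ ^ 2 + ‖p₂ - p₀‖ ^ 2 - ‖p₂ - p₁‖ ^ 2) ^ 2 := by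
  have h21 : p₂ - p₁ = (p₂ - p₀) - (p₁ - p₀) := by abel
  rw [h21]
  set u := p₁ - p₀
  set v := p₂ - p₀
  have hsub : ∀ i, (v - u) i = v i - u i := fun i => rfl
  have hc : ∀ i, cross3 u v i = ![u 1 * v 2 - u 2 * v 1, u 2 * v 0 - u 0 * v 2,
      u 0 * v 1 - u 1 * v 0] i := fun i => rfl
  rw [triArea, div_pow, normsq3, normsq3, normsq3, normsq3, hc, hc, hc, hsub, hsub, hsub]
  simp only [Matrix.cons_val_zero, Matrix.cons_val_one, Matrix.head_cons, Matrix.cons_val_two,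
    Matrix.tail_cons]
  ring

/-- difference bound for G(x,y,z)=4xy-(x+y-z)^2 -/
lemma Gdiff (x y z x' y' z' δ M : ℝ) (hM : 0 ≤ M) (hδ : 0 ≤ δ)
    (hx0 : 0 ≤ x) (hy0 : 0 ≤ y) (hz0 : 0 ≤ z) (hx0' : 0 ≤ x') (hy0' : 0 ≤ y') (hz0' : 0 ≤ z')
    (hxM : x ≤ M) (hyM : y ≤ M) (hzM : z ≤ M) (hxM' : x' ≤ M) (hyM' : y' ≤ M) (hzM' : z' ≤ M)
    (hdx : |x' - x| ≤ δ) (hdy : |y' - y| ≤ δ) (hdz : |z' - z| ≤ δ) :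
    |(4 * x' * y' - (x' + y' - z') ^ 2) - (4 * x * y - (x + y - z) ^ 2)| ≤ 20 * δ * M := by
  have e1 : |4 * x' * y' - 4 * x * y| ≤ 8 * δ * M := by
    have h1 : 4 * x' * y' - 4 * x * y = 4 * ((x' - x) * y' + x * (y' - y)) := by ring
    rw [h1, abs_mul]
    have h2 : |(x' - x) * y' + x * (y' - y)| ≤ δ * M + M * δ := by
      refine (abs_add_le _ _).trans ?_
      rw [abs_mul, abs_mul, abs_of_nonneg hy0', abs_of_nonneg hx0]
      gcongr
    have h4 : |(4:ℝ)| = 4 := by norm_num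
    rw [h4]
    nlinarith [h2]
  have e2 : |(x' + y' - z') ^ 2 - (x + y - z) ^ 2| ≤ 12 * δ * M := by
    have h1 : (x' + y' - z') ^ 2 - (x + y - z) ^ 2 =
        ((x' + y' - z') - (x + y - z)) * ((x' + y' - z') + (x + y - z)) := by ring
    rw [h1, abs_mul]
    have hd : |(x' + y' - z') - (x + y - z)| ≤ 3 * δ := by
      have : (x' + y' - z') - (x + y - z) = (x' - x) + (y' - y) - (z' - z) := by ring
      rw [this]
      calc |(x' - x) + (y' - y) - (z' - z)| ≤ |(x' - x) + (y' - y)| + |z' - z| :=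
            abs_sub _ _
        _ ≤ (|x' - x| + |y' - y|) + |z' - z| := by gcongr; exact abs_add_le _ _
        _ ≤ 3 * δ := by linarith
    have hs : |(x' + y' - z') + (x + y - z)| ≤ 4 * M := by
      rw [abs_le]; constructor <;> nlinarith
    calc |(x' + y' - z') - (x + y - z)| * |(x' + y' - z') + (x + y - z)|
        ≤ (3 * δ) * (4 * M) := by
          exact mul_le_mul hd hs (abs_nonneg _) (by positivity)
      _ = 12 * δ * M := by ring
  calc |(4 * x' * y' - (x' + y' - z') ^ 2) - (4 * x * y - (x + y - z) ^ 2)|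
      = |(4 * x' * y' - 4 * x * y) - ((x' + y' - z') ^ 2 - (x + y - z) ^ 2)| := by ring_nf
    _ ≤ |4 * x' * y' - 4 * x * y| + |(x' + y' - z') ^ 2 - (x + y - z) ^ 2| := abs_sub _ _
    _ ≤ 20 * δ * M := by linarith

lemma sq_close (a a' h cc : ℝ) (ha0 : 0 ≤ a) (ha0' : 0 ≤ a') (hah : a ≤ h)
    (hh : 0 < h) (hh1 : h ≤ 1) (hcc : 0 ≤ cc) (hd : |a' - a| ≤ cc * h ^ 3) :
    |a' ^ 2 - a ^ 2| ≤ cc * (2 + cc) * h ^ 4 := by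
  rw [abs_le] at hd ⊢
  have h2 : h ^ 2 ≤ 1 := by nlinarith
  have hh3 : h ^ 3 ≤ h := by nlinarith
  have hsum : a' + a ≤ (2 + cc) * h := by
    linarith [mul_le_mul_of_nonneg_left hh3 hcc]
  have hsum0 : 0 ≤ a' + a := by linarith
  have hδ0 : 0 ≤ cc * h ^ 3 := by positivity
  have m1 := mul_le_mul hd.2 hsum hsum0 hδ0
  have m2 := mul_le_mul (by linarith [hd.1] : a - a' ≤ cc * h ^ 3) (by linarith : a + a' ≤ (2 + cc) * h) (by linarith) hδ0
  exact ⟨by nlinarith [m2], by nlinarith [m1]⟩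

set_option maxHeartbeats 1000000 in
/-- Lemma 3.5, second estimate: supercloseness of triangle area ratios. -/
theorem triangle_area_ratio_supercloseness
    (θ c : ℝ) (hθ : 0 < θ) (hc : 0 ≤ c) :
    ∃ C > (0 : ℝ), ∃ h₀ > (0 : ℝ), h₀ ≤ 1 ∧
      ∀ h : ℝ, 0 < h → h ≤ h₀ →
        ∀ p₀ p₁ p₂ q₀ q₁ q₂ : EuclideanSpace ℝ (Fin 3),
          θ * h ≤ ‖p₁ - p₀‖ → ‖p₁ - p₀‖ ≤ h →
          θ * h ≤ ‖p₂ - p₀‖ → ‖p₂ - p₀‖ ≤ h →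
          θ * h ≤ ‖p₂ - p₁‖ → ‖p₂ - p₁‖ ≤ h →
          θ * h ^ 2 ≤ triArea p₀ p₁ p₂ →
          |‖q₁ - q₀‖ - ‖p₁ - p₀‖| ≤ c * h ^ 3 →
          |‖q₂ - q₀‖ - ‖p₂ - p₀‖| ≤ c * h ^ 3 →
          |‖q₂ - q₁‖ - ‖p₂ - p₁‖| ≤ c * h ^ 3 →
          |triArea q₀ q₁ q₂ / triArea p₀ p₁ p₂ - 1| ≤ C * h ^ 2 := by
  set K : ℝ := 20 * (c * (2 + c)) * (1 + c) ^ 2 with hK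
  have hK0 : 0 ≤ K := by positivity
  refine ⟨K / (16 * θ ^ 2) + 1, by positivity, 1, one_pos, le_rfl, ?_⟩
  intro h hh hh1 p₀ p₁ p₂ q₀ q₁ q₂ ha1 ha2 hb1 hb2 hc1 hc2 hA hqa hqb hqc
  set a := ‖p₁ - p₀‖; set b := ‖p₂ - p₀‖; set cc := ‖p₂ - p₁‖
  set a' := ‖q₁ - q₀‖; set b' := ‖q₂ - q₀‖; set cc' := ‖q₂ - q₁‖
  set A₁ := triArea p₀ p₁ p₂ with hA₁
  set A₂ := triArea q₀ q₁ q₂ with hA₂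
  have hA1pos : 0 < A₁ := lt_of_lt_of_le (by positivity) hA
  have hA2nn : 0 ≤ A₂ := by
    rw [hA₂, triArea]; positivity
  -- bounds on q side lengths
  have ha0 : (0:ℝ) ≤ a := norm_nonneg _
  have hb0 : (0:ℝ) ≤ b := norm_nonneg _
  have hcc0 : (0:ℝ) ≤ cc := norm_nonneg _
  have ha0' : (0:ℝ) ≤ a' := norm_nonneg _
  have hb0' : (0:ℝ) ≤ b' := norm_nonneg _
  have hcc0' : (0:ℝ) ≤ cc' := norm_nonneg _
  have h2 : h ^ 2 ≤ 1 := by nlinarith [mul_pos hh hh]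
  have hh3 : h ^ 3 ≤ h := by
    calc h ^ 3 = h ^ 2 * h := by ring
      _ ≤ 1 * h := by gcongr
      _ = h := one_mul h
  have hM : ∀ s s' : ℝ, 0 ≤ s' → s ≤ h → |s' - s| ≤ c * h ^ 3 → s' ^ 2 ≤ (1 + c) ^ 2 * h ^ 2 := by
    intro s s' hs0 hsh hd
    rw [abs_le] at hd
    have h1 : s' ≤ (1 + c) * h := by
      linarith [mul_le_mul_of_nonneg_left hh3 hc, hd.2]
    calc s' ^ 2 ≤ ((1 + c) * h) ^ 2 := pow_le_pow_left₀ hs0 h1 2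
      _ = (1 + c) ^ 2 * h ^ 2 := by ring
  have hMp : ∀ s : ℝ, 0 ≤ s → s ≤ h → s ^ 2 ≤ (1 + c) ^ 2 * h ^ 2 := by
    intro s h0 h1
    calc s ^ 2 ≤ h ^ 2 := pow_le_pow_left₀ h0 h1 2
      _ = 1 ^ 2 * h ^ 2 := by ring
      _ ≤ (1 + c) ^ 2 * h ^ 2 := by gcongr <;> linarith
  have δdef : ∀ s s' : ℝ, 0 ≤ s → 0 ≤ s' → s ≤ h → |s' - s| ≤ c * h ^ 3 →
      |s' ^ 2 - s ^ 2| ≤ c * (2 + c) * h ^ 4 :=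
    fun s s' h1 h2 h3 h4 => sq_close s s' h c h1 h2 h3 hh hh1 hc h4
  have key : |16 * A₂ ^ 2 - 16 * A₁ ^ 2| ≤ K * h ^ 6 := by
    rw [hA₁, hA₂, heron, heron]
    have := Gdiff (a ^ 2) (b ^ 2) (cc ^ 2) (a' ^ 2) (b' ^ 2) (cc' ^ 2)
      (c * (2 + c) * h ^ 4) ((1 + c) ^ 2 * h ^ 2) (by positivity) (by positivity)
      (by positivity) (by positivity) (by positivity) (by positivity) (by positivity)
      (by positivity)
      (hMp a ha0 ha2) (hMp b hb0 hb2) (hMp cc hcc0 hc2)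
      (hM a a' ha0' ha2 hqa) (hM b b' hb0' hb2 hqb) (hM cc cc' hcc0' hc2 hqc)
      (δdef a a' ha0 ha0' ha2 hqa) (δdef b b' hb0 hb0' hb2 hqb)
      (δdef cc cc' hcc0 hcc0' hc2 hqc)
    calc |(4 * a' ^ 2 * b' ^ 2 - (a' ^ 2 + b' ^ 2 - cc' ^ 2) ^ 2) -
          (4 * a ^ 2 * b ^ 2 - (a ^ 2 + b ^ 2 - cc ^ 2) ^ 2)|
        ≤ 20 * (c * (2 + c) * h ^ 4) * ((1 + c) ^ 2 * h ^ 2) := this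
      _ = K * h ^ 6 := by rw [hK]; ring
  -- from squares to ratio
  have hratio_nn : 0 ≤ A₂ / A₁ := div_nonneg hA2nn hA1pos.le
  have step1 : |A₂ / A₁ - 1| ≤ |(A₂ / A₁) ^ 2 - 1| := by
    set t := A₂ / A₁
    have : |t ^ 2 - 1| = |t - 1| * (t + 1) := by
      rw [show t ^ 2 - 1 = (t - 1) * (t + 1) by ring, abs_mul,
        abs_of_nonneg (by linarith : (0:ℝ) ≤ t + 1)]
    linarith [this, mul_nonneg (abs_nonneg (t - 1)) hratio_nn]
  have step2 : |(A₂ / A₁) ^ 2 - 1| ≤ K / (16 * θ ^ 2) * h ^ 2 := by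
    have hA1sq : θ ^ 2 * h ^ 4 ≤ A₁ ^ 2 := by
      calc θ ^ 2 * h ^ 4 = (θ * h ^ 2) ^ 2 := by ring
        _ ≤ A₁ ^ 2 := pow_le_pow_left₀ (by positivity) hA 2
    have e : (A₂ / A₁) ^ 2 - 1 = (16 * A₂ ^ 2 - 16 * A₁ ^ 2) / (16 * A₁ ^ 2) := by
      field_simp
    rw [e, abs_div, abs_of_nonneg (by positivity : (0:ℝ) ≤ 16 * A₁ ^ 2),
      div_le_iff₀ (by positivity)]
    calc |16 * A₂ ^ 2 - 16 * A₁ ^ 2| ≤ K * h ^ 6 := key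
      _ ≤ K / (16 * θ ^ 2) * h ^ 2 * (16 * A₁ ^ 2) := by
        rw [div_mul_eq_mul_div, div_mul_eq_mul_div, le_div_iff₀ (by positivity)]
        nlinarith [mul_nonneg (mul_nonneg hK0 (pow_nonneg hh.le 2)) (sub_nonneg.2 hA1sq)]
  calc |A₂ / A₁ - 1| ≤ K / (16 * θ ^ 2) * h ^ 2 := step1.trans step2
    _ ≤ (K / (16 * θ ^ 2) + 1) * h ^ 2 := by nlinarith [sq_nonneg h]
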